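/- Let (x_j)_{j∈J} be a frame of a Hilbert space H with upper frame bound B, and suppose there is a₀ > 0 such that Σ_{j∈J} ||⟨x, x_j⟩|² − |⟨y, x_j⟩|²|² ≥ a₀(‖x − y‖²‖x + y‖² − 4(Im⟨x, y⟩)²) for all x, y ∈ H. Then (x_j)_{j∈J} is a 4-frame of H with lower 4-frame bound a₀^{1/4} and upper 4-frame bound B^{1/2}; that is, a₀^{1/4}‖x‖ ≤ (Σ_{j∈J} |⟨x, x_j⟩|⁴)^{1/4} ≤ B^{1/2}‖x‖ for all x ∈ H. -/
import Mathlib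


open scoped ComplexInnerProductSpace

/-- If `(x j)` is a frame of a Hilbert space `H` with upper frame bound `B` satisfying
Balan's inequality with constant `a₀ > 0`, then `(x j)` is a 4-frame of `H` with lower
4-frame bound `a₀^{1/4}` and upper 4-frame bound `B^{1/2}`. -/
theorem stmt_11 {H : Type*} [NormedAddCommGroup H] [InnerProductSpace ℂ H] [CompleteSpace H]
    {J : Type*} (x : J → H) (B a₀ : ℝ) (hB : 0 < B)
    (hx_summable : ∀ u : H, Summable fun j => ‖⟪u, x j⟫‖ ^ 2)
    (hx_upper : ∀ u : H, ∑' j, ‖⟪u, x j⟫‖ ^ 2 ≤ B * ‖u‖ ^ 2)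
    (ha₀ : 0 < a₀)
    (hbalan : ∀ u v : H,
      a₀ * (‖u - v‖ ^ 2 * ‖u + v‖ ^ 2 - 4 * (⟪u, v⟫.im) ^ 2) ≤
        ∑' j, (‖⟪u, x j⟫‖ ^ 2 - ‖⟪v, x j⟫‖ ^ 2) ^ 2) :
    ∀ u : H,
      a₀ ^ (1 / 4 : ℝ) * ‖u‖ ≤ (∑' j, ‖⟪u, x j⟫‖ ^ 4) ^ (1 / 4 : ℝ) ∧
        (∑' j, ‖⟪u, x j⟫‖ ^ 4) ^ (1 / 4 : ℝ) ≤ Real.sqrt B * ‖u‖ := by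
  intro u
  set a : J → ℝ := fun j => ‖⟪u, x j⟫‖ ^ 2 with ha_def
  have ha_nonneg : ∀ j, 0 ≤ a j := fun j => sq_nonneg _
  have ha : Summable a := hx_summable u
  set T : ℝ := ∑' j, a j with hT_def
  have hT_nonneg : 0 ≤ T := tsum_nonneg ha_nonneg
  have hT : T ≤ B * ‖u‖ ^ 2 := hx_upper u
  have hle : ∀ j, a j ≤ T := fun j => Summable.le_tsum ha j (fun i _ => ha_nonneg i)
  have hb_eq : ∀ j, ‖⟪u, x j⟫‖ ^ 4 = a j ^ 2 := by
    intro j; simp [ha_def]; ring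
  have hb_le : ∀ j, a j ^ 2 ≤ a j * T := by
    intro j
    calc a j ^ 2 = a j * a j := sq (a j) ▸ by ring
    _ ≤ a j * T := mul_le_mul_of_nonneg_left (hle j) (ha_nonneg j)
  have hb_summable : Summable fun j => a j ^ 2 :=
    Summable.of_nonneg_of_le (fun j => sq_nonneg _) hb_le (ha.mul_right T)
  have htsum_eq : (∑' j, ‖⟪u, x j⟫‖ ^ 4) = ∑' j, a j ^ 2 := tsum_congr hb_eq
  have hS_nonneg : 0 ≤ ∑' j, a j ^ 2 := tsum_nonneg fun j => sq_nonneg _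
  -- upper bound
  have hupper : (∑' j, a j ^ 2) ≤ (B * ‖u‖ ^ 2) ^ 2 := by
    calc (∑' j, a j ^ 2) ≤ ∑' j, a j * T :=
          Summable.tsum_le_tsum hb_le hb_summable (ha.mul_right T)
    _ = T * T := by rw [tsum_mul_right]
    _ ≤ (B * ‖u‖ ^ 2) * (B * ‖u‖ ^ 2) := by
        exact mul_le_mul hT hT hT_nonneg (by positivity)
    _ = (B * ‖u‖ ^ 2) ^ 2 := (sq _).symm
  -- lower bound from Balan with v = 0
  have hlower : a₀ * ‖u‖ ^ 4 ≤ ∑' j, a j ^ 2 := by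
    have := hbalan u 0
    simp only [sub_zero, add_zero, inner_zero_right, Complex.zero_im, norm_zero] at this
    calc a₀ * ‖u‖ ^ 4 = a₀ * (‖u‖ ^ 2 * ‖u‖ ^ 2 - 4 * (0:ℝ) ^ 2) := by ring
    _ ≤ ∑' j, (‖⟪u, x j⟫‖ ^ 2 - (0:ℝ) ^ 2) ^ 2 := by
        convert this using 3 <;> simp
    _ = ∑' j, a j ^ 2 := by
        apply tsum_congr; intro j; simp [ha_def]
  rw [htsum_eq]
  constructor
  · have h1 : (a₀ * ‖u‖ ^ 4) ^ (1 / 4 : ℝ) ≤ (∑' j, a j ^ 2) ^ (1 / 4 : ℝ) :=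
      Real.rpow_le_rpow (by positivity) hlower (by norm_num)
    calc a₀ ^ (1 / 4 : ℝ) * ‖u‖ = (a₀ * ‖u‖ ^ 4) ^ (1 / 4 : ℝ) := by
          rw [Real.mul_rpow ha₀.le (by positivity)]
          congr 1
          rw [← Real.rpow_natCast ‖u‖ 4, ← Real.rpow_mul (norm_nonneg u)]
          norm_num
    _ ≤ _ := h1
  · have h2 : (∑' j, a j ^ 2) ^ (1 / 4 : ℝ) ≤ ((B * ‖u‖ ^ 2) ^ 2) ^ (1 / 4 : ℝ) :=
      Real.rpow_le_rpow hS_nonneg hupper (by norm_num)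
    calc (∑' j, a j ^ 2) ^ (1 / 4 : ℝ) ≤ ((B * ‖u‖ ^ 2) ^ 2) ^ (1 / 4 : ℝ) := h2
    _ = Real.sqrt B * ‖u‖ := by
        rw [← Real.rpow_natCast (B * ‖u‖ ^ 2) 2, ← Real.rpow_mul (by positivity)]
        norm_num
        rw [← Real.sqrt_eq_rpow, Real.sqrt_mul hB.le, Real.sqrt_sq (norm_nonneg u)]
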